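/- Let {τ_n}_{n≥1} be piecewise expanding maps of [0,1] (each piecewise strictly monotone and C² on the intervals of a finite partition, with |τ_n'| ≥ s > 1 on each piece), converging uniformly to a map τ, and assume all τ_n satisfy the Lasota–Yorke inequality V(P_{τ_n} f) ≤ A·V(f) + B·∫|f| dm with common constants 0 ≤ A < 1 and B. Then the limit map τ admits an absolutely continuous invariant probability measure whose density is of bounded variation with V(f*) ≤ B/(1−A). -/

import Mathlib

open MeasureTheory Filter Topology
open scoped ENNReal
open scoped NNReal

/-- Lebesgue measure on `[0,1]`. -/
noncomputable def m : Measure ℝ := volume.restrict (Set.Icc 0 1)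

/-- `T : [0,1] → [0,1]` is piecewise expanding: there is a partition
`0 = a_0 < ⋯ < a_r = 1` such that on each open interval `(a_{i-1}, a_i)` the map `T`
is strictly monotone and `C²` with `|T'| ≥ s` there. -/
def PiecewiseExpanding (T : ℝ → ℝ) (s : ℝ) : Prop :=
  ∃ (r : ℕ) (a : ℕ → ℝ), 0 < r ∧ a 0 = 0 ∧ a r = 1 ∧
    (∀ i < r, a i < a (i + 1)) ∧
    ∀ i < r,
      (StrictMonoOn T (Set.Ioo (a i) (a (i + 1))) ∨
        StrictAntiOn T (Set.Ioo (a i) (a (i + 1)))) ∧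
      ContDiffOn ℝ 2 T (Set.Ioo (a i) (a (i + 1))) ∧
      ∀ x ∈ Set.Ioo (a i) (a (i + 1)),
        s ≤ |derivWithin T (Set.Ioo (a i) (a (i + 1))) x|

/-- `g` is a version of the Frobenius–Perron image of `f` under `T`:
`∫_A g dm = ∫_{T⁻¹(A)} f dm` for every Borel set `A`. -/
def IsFPImage (T : ℝ → ℝ) (f g : ℝ → ℝ) : Prop :=
  ∀ A : Set ℝ, MeasurableSet A → ∫ x in A, g x ∂m = ∫ x in T ⁻¹' A, f x ∂m

namespace ACIM

open Set

/-- clamp to `[0,1]` -/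
noncomputable def cl (x : ℝ) : ℝ := max 0 (min 1 x)

lemma cl_mem (x : ℝ) : cl x ∈ Icc (0:ℝ) 1 :=
  ⟨le_max_left _ _, max_le zero_le_one (min_le_left _ _)⟩

lemma cl_mono : Monotone cl := fun _ _ h => max_le_max le_rfl (min_le_min le_rfl h)

lemma cl_eq_self {x : ℝ} (hx : x ∈ Icc (0:ℝ) 1) : cl x = x := by
  rcases hx with ⟨h0, h1⟩
  rw [cl, min_eq_right h1, max_eq_right h0]

lemma cl_continuous : Continuous cl :=
  continuous_const.max (continuous_const.min continuous_id)

lemma cl_eq_one {y : ℝ} (hy : 1 ≤ y) : cl y = 1 := by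
  rw [cl, min_eq_left hy, max_eq_right zero_le_one]

lemma cl_eq_zero {y : ℝ} (hy : y ≤ 0) : cl y = 0 := by
  rw [cl, max_eq_left (le_trans (min_le_right _ _) hy)]

lemma abs_min_sub_min_le (c a b : ℝ) : |min c a - min c b| ≤ |a - b| := by
  rcases le_total a c with h1 | h1 <;> rcases le_total b c with h2 | h2
  · rw [min_eq_right h1, min_eq_right h2]
  · rw [min_eq_right h1, min_eq_left h2, abs_of_nonpos (by linarith)]
    calc -(a - c) ≤ b - a := by linarith
      _ ≤ |b - a| := le_abs_self _
      _ = |a - b| := abs_sub_comm _ _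
  · rw [min_eq_left h1, min_eq_right h2, abs_of_nonneg (by linarith)]
    calc c - b ≤ a - b := by linarith
      _ ≤ |a - b| := le_abs_self _
  · rw [min_eq_left h1, min_eq_left h2]
    simp [abs_nonneg]

lemma cl_lipschitz (a b : ℝ) : |cl a - cl b| ≤ |a - b| := by
  calc |cl a - cl b| = |max (min 1 a) 0 - max (min 1 b) 0| := by rw [cl, cl, max_comm, max_comm 0]
    _ ≤ |min 1 a - min 1 b| := abs_max_sub_max_le_abs _ _ _
    _ ≤ |a - b| := abs_min_sub_min_le _ _ _

instance : IsProbabilityMeasure m := by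
  constructor
  show volume.restrict (Set.Icc 0 1) univ = 1
  rw [Measure.restrict_apply_univ, Real.volume_Icc]
  norm_num

lemma ae_mem_Icc : ∀ᵐ x ∂m, x ∈ Icc (0:ℝ) 1 :=
  ae_restrict_mem measurableSet_Icc

lemma m_null_of_countable {S : Set ℝ} (hS : S.Countable) : m S = 0 :=
  le_antisymm (le_trans (Measure.restrict_le_self _) (le_of_eq (hS.measure_zero volume)))
    (by simp)

section BVhelpers

variable {f : ℝ → ℝ}

lemma bv_decomp (h : BoundedVariationOn f (Icc 0 1)) :
    ∃ p q : ℝ → ℝ, Monotone p ∧ Monotone q ∧ (∀ x, f (cl x) = p x - q x) ∧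
      (∀ x, 0 ≤ p x ∧ p x ≤ (eVariationOn f (Icc 0 1)).toReal) := by
  refine ⟨fun x => variationOnFromTo f (Icc 0 1) 0 (cl x),
    fun x => variationOnFromTo f (Icc 0 1) 0 (cl x) - f (cl x), ?_, ?_, fun x => by ring, ?_⟩
  · intro a b hab
    exact variationOnFromTo.monotoneOn h.locallyBoundedVariationOn
      (left_mem_Icc.2 zero_le_one) (cl_mem a) (cl_mem b) (cl_mono hab)
  · intro a b hab
    exact variationOnFromTo.sub_self_monotoneOn h.locallyBoundedVariationOn
      (left_mem_Icc.2 zero_le_one) (cl_mem a) (cl_mem b) (cl_mono hab)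
  · intro x
    refine ⟨variationOnFromTo.nonneg_of_le f _ (cl_mem x).1, ?_⟩
    show variationOnFromTo f (Icc 0 1) 0 (cl x) ≤ _
    rw [variationOnFromTo.eq_of_le f _ (cl_mem x).1]
    exact ENNReal.toReal_mono h (eVariationOn.mono f inter_subset_left)

lemma bv_measurable_comp_cl (h : BoundedVariationOn f (Icc 0 1)) :
    Measurable fun x => f (cl x) := by
  obtain ⟨p, q, hp, hq, hfpq, -⟩ := bv_decomp h
  have : (fun x => f (cl x)) = fun x => p x - q x := funext hfpq
  rw [this]
  exact hp.measurable.sub hq.measurable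

lemma bv_bound_comp_cl (h : BoundedVariationOn f (Icc 0 1)) (x : ℝ) :
    |f (cl x)| ≤ |f 1| + (eVariationOn f (Icc 0 1)).toReal := by
  have h1 : dist (f (cl x)) (f 1) ≤ (eVariationOn f (Icc 0 1)).toReal :=
    h.dist_le (cl_mem x) (right_mem_Icc.2 zero_le_one)
  rw [Real.dist_eq] at h1
  calc |f (cl x)| = |f 1 + (f (cl x) - f 1)| := by ring_nf
    _ ≤ |f 1| + |f (cl x) - f 1| := abs_add_le _ _
    _ ≤ _ := by linarith

lemma bv_ae_eq_comp_cl : f =ᵐ[m] fun x => f (cl x) :=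
  ae_mem_Icc.mono fun x hx => by show f x = f (cl x); rw [cl_eq_self hx]

lemma bv_integrable_comp_cl (h : BoundedVariationOn f (Icc 0 1)) :
    Integrable (fun x => f (cl x)) m := by
  refine Integrable.mono' (integrable_const (|f 1| + (eVariationOn f (Icc 0 1)).toReal))
    (bv_measurable_comp_cl h).aestronglyMeasurable ?_
  exact Eventually.of_forall fun x => by
    rw [Real.norm_eq_abs]; exact bv_bound_comp_cl h x

lemma bv_integrable (h : BoundedVariationOn f (Icc 0 1)) : Integrable f m :=
  (bv_integrable_comp_cl h).congr bv_ae_eq_comp_cl.symm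

lemma evar_comp_cl (f : ℝ → ℝ) :
    eVariationOn (fun x => f (cl x)) (Icc 0 1) = eVariationOn f (Icc 0 1) :=
  eVariationOn.eq_of_eqOn fun x hx => by rw [cl_eq_self hx]

end BVhelpers

section evar

lemma evar_const (c : ℝ) (s : Set ℝ) : eVariationOn (fun _ => c) s = 0 :=
  eVariationOn.constant_on (by rintro x ⟨a, -, rfl⟩ y ⟨b, -, rfl⟩; rfl)

lemma evar_add_le (f g : ℝ → ℝ) (s : Set ℝ) :
    eVariationOn (fun x => f x + g x) s ≤ eVariationOn f s + eVariationOn g s := by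
  apply iSup_le
  rintro ⟨n, ⟨u, hu, us⟩⟩
  calc ∑ i ∈ Finset.range n, edist (f (u (i+1)) + g (u (i+1))) (f (u i) + g (u i))
      ≤ ∑ i ∈ Finset.range n,
        (edist (f (u (i+1))) (f (u i)) + edist (g (u (i+1))) (g (u i))) :=
        Finset.sum_le_sum fun i _ => edist_add_add_le _ _ _ _
    _ = (∑ i ∈ Finset.range n, edist (f (u (i+1))) (f (u i)))
        + ∑ i ∈ Finset.range n, edist (g (u (i+1))) (g (u i)) := Finset.sum_add_distrib
    _ ≤ _ := add_le_add (eVariationOn.sum_le (f := f) (n := n) hu us) (eVariationOn.sum_le (f := g) (n := n) hu us)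

lemma evar_const_mul_le {c : ℝ} (hc : 0 ≤ c) (f : ℝ → ℝ) (s : Set ℝ) :
    eVariationOn (fun x => c * f x) s ≤ ENNReal.ofReal c * eVariationOn f s := by
  apply iSup_le
  rintro ⟨n, ⟨u, hu, us⟩⟩
  have key : ∀ a b : ℝ, edist (c * a) (c * b) = ENNReal.ofReal c * edist a b := by
    intro a b
    rw [edist_dist, edist_dist, Real.dist_eq, Real.dist_eq, ← mul_sub, abs_mul,
      abs_of_nonneg hc, ENNReal.ofReal_mul hc]
  calc ∑ i ∈ Finset.range n, edist (c * f (u (i+1))) (c * f (u i))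
      = ∑ i ∈ Finset.range n, ENNReal.ofReal c * edist (f (u (i+1))) (f (u i)) := by
        exact Finset.sum_congr rfl fun i _ => key _ _
    _ = ENNReal.ofReal c * ∑ i ∈ Finset.range n, edist (f (u (i+1))) (f (u i)) :=
        (Finset.mul_sum _ _ _).symm
    _ ≤ _ := mul_le_mul_right (eVariationOn.sum_le (f := f) (n := n) hu us) _

lemma evar_finset_sum_le {ι : Type*} (t : Finset ι) (F : ι → ℝ → ℝ) (s : Set ℝ) :
    eVariationOn (fun x => ∑ k ∈ t, F k x) s ≤ ∑ k ∈ t, eVariationOn (F k) s := by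
  classical
  induction t using Finset.induction with
  | empty => simp [evar_const]
  | insert a t' hnot ih =>
    simp only [Finset.sum_insert hnot]
    exact le_trans (evar_add_le _ _ s) (add_le_add le_rfl ih)

lemma evar_le_of_tendsto {F : ℕ → ℝ → ℝ} {f : ℝ → ℝ} {s : Set ℝ} {c : ℝ≥0∞}
    (hconv : ∀ x ∈ s, Tendsto (fun j => F j x) atTop (𝓝 (f x)))
    (hF : ∀ j, eVariationOn (F j) s ≤ c) : eVariationOn f s ≤ c := by
  by_contra hlt
  push_neg at hlt
  obtain ⟨j, hj⟩ := (eVariationOn.lowerSemicontinuous_aux hconv hlt).exists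
  exact absurd (hF j) (not_le.mpr hj)

lemma evar_le_of_right_dense {f : ℝ → ℝ} {t : Set ℝ} (h1t : (1:ℝ) ∈ t)
    (H : ∀ x ∈ Ico (0:ℝ) 1, ∀ ε > (0:ℝ), ∀ b > x, ∃ y ∈ t, x < y ∧ y < b ∧ |f y - f x| ≤ ε) :
    eVariationOn f (Icc 0 1) ≤ eVariationOn f t := by
  classical
  apply iSup_le
  rintro ⟨n, ⟨u0, hu0, hu0s⟩⟩
  dsimp only
  set u : ℕ → ℝ := fun i => u0 (min i n) with hu_def
  have hu : Monotone u := fun a b hab => hu0 (min_le_min hab le_rfl)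
  have hus : ∀ i, u i ∈ Icc (0:ℝ) 1 := fun i => hu0s _
  have hcap : ∀ k, u k ≤ u n := fun k =>
    hu0 (le_trans (min_le_right k n) (le_of_eq (min_self n).symm))
  have hsum : ∑ i ∈ Finset.range n, edist (f (u0 (i+1))) (f (u0 i))
      = ∑ i ∈ Finset.range n, edist (f (u (i+1))) (f (u i)) := by
    apply Finset.sum_congr rfl
    intro i hi
    have hi' : i < n := Finset.mem_range.mp hi
    have e1 : u (i+1) = u0 (i+1) := by
      simp only [hu_def, min_eq_left (Nat.succ_le_of_lt hi')]
    have e2 : u i = u0 i := by simp only [hu_def, min_eq_left hi'.le]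
    rw [e1, e2]
  rw [hsum]
  rcases eq_top_or_lt_top (eVariationOn f t) with htop | hfin
  · rw [htop]; exact le_top
  refine ENNReal.le_of_forall_pos_le_add fun ε' hε' _ => ?_
  set ε : ℝ := (ε' : ℝ) / (2 * n + 2) with hεdef
  have hε : 0 < ε := by
    apply div_pos (by exact_mod_cast hε') (by positivity)
  -- least upper bounds for perturbation
  set S : ℕ → Finset ℕ := fun i => (Finset.range (n+1)).filter (fun j => u i < u j) with hS
  set b : ℕ → ℝ := fun i => if h : (S i).Nonempty then (S i).inf' h u else 2 with hbdef
  have bprop1 : ∀ i, u i < b i := by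
    intro i
    by_cases h : (S i).Nonempty
    · simp only [hbdef]
      rw [dif_pos h, Finset.lt_inf'_iff]
      intro j hj
      exact (Finset.mem_filter.mp hj).2
    · simp only [hbdef]
      rw [dif_neg h]
      have := (hus i).2
      linarith
  have bprop2 : ∀ i k, u i < u k → b i ≤ u k := by
    intro i k hik
    by_cases hk : k ≤ n
    · have hmem : k ∈ S i := Finset.mem_filter.mpr ⟨Finset.mem_range.mpr (by omega), hik⟩
      have hne : (S i).Nonempty := ⟨k, hmem⟩
      simp only [hbdef]
      rw [dif_pos hne]
      exact Finset.inf'_le u hmem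
    · have h2 : u i < u n := lt_of_lt_of_le hik (hcap k)
      have hmem : n ∈ S i := Finset.mem_filter.mpr ⟨Finset.mem_range.mpr (by omega), h2⟩
      have hne : (S i).Nonempty := ⟨n, hmem⟩
      simp only [hbdef]
      rw [dif_pos hne]
      exact le_trans (Finset.inf'_le u hmem) (hu (by omega))
  have bprop3 : ∀ i i', u i = u i' → b i = b i' := by
    intro i i' h
    have hSeq : S i = S i' := by
      apply Finset.filter_congr
      intro j _
      simp [h]
    simp only [hbdef]
    rw [hSeq]
  -- choose perturbed points
  have freshspec : ∀ i, ∃ y, y ∈ t ∧ u i ≤ y ∧ y < b i ∧ |f y - f (u i)| ≤ ε := by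
    intro i
    by_cases h1i : u i = 1
    · refine ⟨1, h1t, h1i.le, ?_, by rw [h1i]; simp [hε.le]⟩
      have hSemp : ¬ (S i).Nonempty := by
        rintro ⟨j, hj⟩
        have h2 := (Finset.mem_filter.mp hj).2
        have h3 := (hus j).2
        rw [h1i] at h2
        linarith
      simp only [hbdef]
      rw [dif_neg hSemp]
      norm_num
    · have hx : u i ∈ Ico (0:ℝ) 1 := ⟨(hus i).1, lt_of_le_of_ne (hus i).2 h1i⟩
      obtain ⟨y, hyt, hxy, hyb, hfy⟩ :=
        H (u i) hx ε hε (min (b i) (u i + 1)) (lt_min (bprop1 i) (by linarith))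
      exact ⟨y, hyt, hxy.le, lt_of_lt_of_le hyb (min_le_left _ _), hfy⟩
  choose fr hfrt hfrle hfrlt hfrclose using freshspec
  set v : ℕ → ℝ := fun i =>
    Nat.rec (fr 0) (fun i vi => if u (i+1) = u i then vi else fr (i+1)) i with hvdef
  have hvsucc : ∀ i, v (i+1) = if u (i+1) = u i then v i else fr (i+1) := fun i => rfl
  have Q : ∀ i, v i ∈ t ∧ u i ≤ v i ∧ v i < b i ∧ |f (v i) - f (u i)| ≤ ε := by
    intro i
    induction i with
    | zero => exact ⟨hfrt 0, hfrle 0, hfrlt 0, hfrclose 0⟩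
    | succ i ih =>
      rw [hvsucc]
      by_cases h : u (i+1) = u i
      · rw [if_pos h, h]
        exact ⟨ih.1, ih.2.1, by rw [bprop3 (i+1) i h]; exact ih.2.2.1, ih.2.2.2⟩
      · rw [if_neg h]
        exact ⟨hfrt _, hfrle _, hfrlt _, hfrclose _⟩
  have hvmono : Monotone v := by
    apply monotone_nat_of_le_succ
    intro i
    rw [hvsucc]
    by_cases h : u (i+1) = u i
    · rw [if_pos h]
    · rw [if_neg h]
      have hlt : u i < u (i+1) := lt_of_le_of_ne (hu (Nat.le_succ i)) (Ne.symm h)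
      exact le_trans (le_of_lt (lt_of_lt_of_le (Q i).2.2.1 (bprop2 i (i+1) hlt)))
        (hfrle (i+1))
  have key : ∀ i, edist (f (u (i+1))) (f (u i))
      ≤ edist (f (v (i+1))) (f (v i)) + 2 * ENNReal.ofReal ε := by
    intro i
    have e1 : edist (f (u (i+1))) (f (v (i+1))) ≤ ENNReal.ofReal ε := by
      rw [edist_dist, Real.dist_eq, abs_sub_comm]
      exact ENNReal.ofReal_le_ofReal (Q (i+1)).2.2.2
    have e2 : edist (f (v i)) (f (u i)) ≤ ENNReal.ofReal ε := by
      rw [edist_dist, Real.dist_eq]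
      exact ENNReal.ofReal_le_ofReal (Q i).2.2.2
    calc edist (f (u (i+1))) (f (u i))
        ≤ edist (f (u (i+1))) (f (v (i+1))) + edist (f (v (i+1))) (f (v i))
          + edist (f (v i)) (f (u i)) := edist_triangle4 _ _ _ _
      _ ≤ ENNReal.ofReal ε + edist (f (v (i+1))) (f (v i)) + ENNReal.ofReal ε := by
          gcongr
      _ = edist (f (v (i+1))) (f (v i)) + 2 * ENNReal.ofReal ε := by ring
  calc ∑ i ∈ Finset.range n, edist (f (u (i+1))) (f (u i))
      ≤ ∑ i ∈ Finset.range n,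
        (edist (f (v (i+1))) (f (v i)) + 2 * ENNReal.ofReal ε) :=
        Finset.sum_le_sum fun i _ => key i
    _ = (∑ i ∈ Finset.range n, edist (f (v (i+1))) (f (v i)))
        + n * (2 * ENNReal.ofReal ε) := by
        rw [Finset.sum_add_distrib, Finset.sum_const, Finset.card_range, nsmul_eq_mul]
    _ ≤ eVariationOn f t + ε' := by
        apply add_le_add
        · exact eVariationOn.sum_le (f := f) (n := n) hvmono fun i => (Q i).1
        · have hn : (n : ℝ≥0∞) = ENNReal.ofReal (n : ℝ) := by
            rw [ENNReal.ofReal_natCast]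
          rw [hn, ← ENNReal.ofReal_ofNat, ← ENNReal.ofReal_mul (by positivity),
            ← ENNReal.ofReal_mul (by positivity)]
          calc ENNReal.ofReal ((n : ℝ) * (2 * ε)) ≤ ENNReal.ofReal (ε' : ℝ) := by
                apply ENNReal.ofReal_le_ofReal
                rw [hεdef]
                rw [div_eq_inv_mul]
                have h2n : (0:ℝ) < 2 * n + 2 := by positivity
                rw [mul_comm (2:ℝ) _, ← mul_assoc]
                calc (n:ℝ) * ((2 * (n:ℝ) + 2)⁻¹ * (ε':ℝ)) * 2
                    = ((2 * n) / (2 * n + 2)) * (ε' : ℝ) := by ring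
                  _ ≤ 1 * (ε' : ℝ) := by
                      apply mul_le_mul_of_nonneg_right _ (by positivity)
                      rw [div_le_one h2n]; linarith
                  _ = (ε' : ℝ) := one_mul _
            _ = (ε' : ℝ≥0∞) := ENNReal.ofReal_coe_nnreal

end evar

section helly

/-- Extend a "monotone function on a countable dense set" to a monotone function. -/
lemma mono_ext {r : ℕ → ℝ} (hr0 : r 0 = 1) (hrmem : ∀ i, r i ∈ Icc (0:ℝ) 1)
    {L : ℕ → ℝ} {K : ℝ} (hLb : ∀ i, L i ∈ Icc (-K) K)
    (hLmono : ∀ i i', r i ≤ r i' → L i ≤ L i') :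
    ∃ G : ℝ → ℝ, Monotone G ∧ (∀ x, G x ∈ Icc (-K) K) ∧
      (∀ x, ¬ x < 1 → G x = L 0) ∧
      (∀ x i, x < r i → G x ≤ L i) ∧
      (∀ x i, r i < x → L i ≤ G x) ∧
      (∀ x, x < 1 → ∀ ε > (0:ℝ), ∃ i, x < r i ∧ L i < G x + ε) := by
  classical
  set G : ℝ → ℝ := fun x => if x < 1 then sInf (L '' {i | x < r i}) else L 0 with hGdef
  have hbdd : ∀ x : ℝ, BddBelow (L '' {i | x < r i}) := fun x =>
    ⟨-K, by rintro y ⟨i, -, rfl⟩; exact (hLb i).1⟩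
  have hne : ∀ x : ℝ, x < 1 → (L '' {i | x < r i}).Nonempty := fun x hx =>
    ⟨L 0, 0, by rw [mem_setOf_eq, hr0]; exact hx, rfl⟩
  have ha : ∀ x i, x < r i → G x ≤ L i := by
    intro x i hxi
    have hx1 : x < 1 := lt_of_lt_of_le hxi (hrmem i).2
    simp only [hGdef, if_pos hx1]
    exact csInf_le (hbdd x) ⟨i, hxi, rfl⟩
  have hb : ∀ x i, r i < x → L i ≤ G x := by
    intro x i hix
    by_cases hx1 : x < 1
    · simp only [hGdef, if_pos hx1]
      apply le_csInf (hne x hx1)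
      rintro y ⟨i', hi', rfl⟩
      exact hLmono i i' (le_of_lt (lt_trans hix hi'))
    · simp only [hGdef, if_neg hx1]
      exact hLmono i 0 (by rw [hr0]; exact (hrmem i).2)
  have hmono : Monotone G := by
    intro x y hxy
    by_cases hy1 : y < 1
    · have hx1 : x < 1 := lt_of_le_of_lt hxy hy1
      simp only [hGdef, if_pos hx1, if_pos hy1]
      apply csInf_le_csInf (hbdd x) (hne y hy1)
      apply Set.image_mono
      intro i hi
      exact lt_of_le_of_lt hxy hi
    · by_cases hx1 : x < 1
      · have := ha x 0 (by rw [hr0]; exact hx1)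
        simp only [hGdef, if_neg hy1]
        exact this
      · simp only [hGdef, if_neg hx1, if_neg hy1]
        exact le_rfl
  have hGb : ∀ x, G x ∈ Icc (-K) K := by
    intro x
    by_cases hx1 : x < 1
    · constructor
      · simp only [hGdef, if_pos hx1]
        apply le_csInf (hne x hx1)
        rintro y ⟨i, -, rfl⟩
        exact (hLb i).1
      · have h0 := ha x 0 (by rw [hr0]; exact hx1)
        exact le_trans h0 (hLb 0).2
    · simp only [hGdef, if_neg hx1]
      exact hLb 0
  refine ⟨G, hmono, hGb, fun x hx => by simp only [hGdef, if_neg hx], ha, hb, ?_⟩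
  intro x hx1 ε hε
  have hGx : G x = sInf (L '' {i | x < r i}) := by simp only [hGdef, if_pos hx1]
  have hlt : sInf (L '' {i | x < r i}) < G x + ε := by
    rw [← hGx]; linarith
  obtain ⟨y, ⟨i, hi, rfl⟩, hy⟩ := (csInf_lt_iff (hbdd x) (hne x hx1)).mp hlt
  exact ⟨i, hi, hy⟩

lemma helly_select (h p q : ℕ → ℝ → ℝ) (K : ℝ)
    (hpm : ∀ j, Monotone (p j)) (hqm : ∀ j, Monotone (q j))
    (hpb : ∀ j x, p j x ∈ Icc (-K) K) (hqb : ∀ j x, q j x ∈ Icc (-K) K)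
    (hpq : ∀ j x, h j x = p j x - q j x) :
    ∃ (f : ℝ → ℝ) (σ : ℕ → ℕ), StrictMono σ ∧ Measurable f ∧ (∀ x, |f x| ≤ 2 * |K|) ∧
      (∃ Bad : Set ℝ, Bad.Countable ∧ ∀ x ∈ Icc (0:ℝ) 1 \ Bad,
        Tendsto (fun j => h (σ j) x) atTop (𝓝 (f x))) ∧
      ∀ c : ℝ≥0∞, (∀ j, eVariationOn (h j) (Icc 0 1) ≤ c) → eVariationOn f (Icc 0 1) ≤ c := by
  classical
  -- countable dense family of points, with r 0 = 1
  set r : ℕ → ℝ := fun i => Nat.casesOn i 1 (fun k => cl ((Denumerable.ofNat ℚ k : ℚ) : ℝ))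
    with hrdef
  have hr0 : r 0 = 1 := rfl
  have hrmem : ∀ i, r i ∈ Icc (0:ℝ) 1 := by
    intro i
    cases i with
    | zero => exact ⟨zero_le_one, le_rfl⟩
    | succ k => exact cl_mem _
  have hrdense : ∀ x w : ℝ, 0 ≤ x → x < w → w ≤ 1 → ∃ i, x < r i ∧ r i < w := by
    intro x w hx hxw hw1
    obtain ⟨qq, hq1, hq2⟩ := exists_rat_btwn hxw
    obtain ⟨k, hk⟩ : ∃ k, Denumerable.ofNat ℚ k = qq := ⟨_, Denumerable.ofNat_encode qq⟩
    have he : r (k + 1) = (qq : ℝ) := by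
      show cl ((Denumerable.ofNat ℚ k : ℚ) : ℝ) = (qq : ℝ)
      rw [hk]
      exact cl_eq_self ⟨le_trans hx hq1.le, le_trans hq2.le hw1⟩
    exact ⟨k + 1, by rw [he]; exact hq1, by rw [he]; exact hq2⟩
  -- extraction of pointwise convergent subsequences on the countable family
  have hcomp : IsCompact (Set.pi Set.univ (fun _ : ℕ => Icc (-K) K)) :=
    isCompact_univ_pi fun _ => isCompact_Icc
  obtain ⟨Lp, hLpmem, σ₁, hσ₁, hLp⟩ :=
    hcomp.tendsto_subseq (x := fun j (i : ℕ) => p j (r i))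
      (fun j => Set.mem_univ_pi.mpr fun i => hpb j (r i))
  obtain ⟨Lq, hLqmem, σ₂, hσ₂, hLq⟩ :=
    hcomp.tendsto_subseq (x := fun j (i : ℕ) => q (σ₁ j) (r i))
      (fun j => Set.mem_univ_pi.mpr fun i => hqb (σ₁ j) (r i))
  set σ : ℕ → ℕ := σ₁ ∘ σ₂ with hσdef
  have hσ : StrictMono σ := hσ₁.comp hσ₂
  have hptend : ∀ i, Tendsto (fun j => p (σ j) (r i)) atTop (𝓝 (Lp i)) := by
    intro i
    exact (tendsto_pi_nhds.mp hLp i).comp hσ₂.tendsto_atTop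
  have hqtend : ∀ i, Tendsto (fun j => q (σ j) (r i)) atTop (𝓝 (Lq i)) := by
    intro i
    exact tendsto_pi_nhds.mp hLq i
  have hLpb : ∀ i, Lp i ∈ Icc (-K) K := fun i => hLpmem i (mem_univ i)
  have hLqb : ∀ i, Lq i ∈ Icc (-K) K := fun i => hLqmem i (mem_univ i)
  have hLpmono : ∀ i i', r i ≤ r i' → Lp i ≤ Lp i' := fun i i' hr =>
    le_of_tendsto_of_tendsto' (hptend i) (hptend i') (fun j => hpm (σ j) hr)
  have hLqmono : ∀ i i', r i ≤ r i' → Lq i ≤ Lq i' := fun i i' hr =>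
    le_of_tendsto_of_tendsto' (hqtend i) (hqtend i') (fun j => hqm (σ j) hr)
  obtain ⟨GP, hGPmono, hGPb, hGP1, hGPa, hGPb', hGPapprox⟩ := mono_ext hr0 hrmem hLpb hLpmono
  obtain ⟨GQ, hGQmono, hGQb, hGQ1, hGQa, hGQb', hGQapprox⟩ := mono_ext hr0 hrmem hLqb hLqmono
  set f : ℝ → ℝ := fun x => GP x - GQ x with hfdef
  -- pointwise convergence of p's at interior continuity points
  have hconvP : ∀ (G : ℝ → ℝ) (L : ℕ → ℝ) (pp : ℕ → ℝ → ℝ), Monotone G →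
      (∀ j, Monotone (pp j)) →
      (∀ i, Tendsto (fun j => pp (σ j) (r i)) atTop (𝓝 (L i))) →
      (∀ x i, x < r i → G x ≤ L i) →
      (∀ x, x < 1 → ∀ ε > (0:ℝ), ∃ i, x < r i ∧ L i < G x + ε) →
      ∀ x, 0 < x → x < 1 → ContinuousAt G x →
      Tendsto (fun j => pp (σ j) x) atTop (𝓝 (G x)) := by
    intro G L pp hGmono hppm htend hGa happrox x hx0 hx1 hcont
    rw [Metric.tendsto_nhds]
    intro ε hε
    have hε3 : 0 < ε / 3 := by linarith
    obtain ⟨i₁, hi₁, hLi₁⟩ := happrox x hx1 (ε/3) hε3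
    obtain ⟨δ, hδ, hδprop⟩ := Metric.continuousAt_iff.mp hcont (ε/3) hε3
    set y : ℝ := max (x - δ/2) (x/2) with hydef
    have hy0 : 0 < y := lt_of_lt_of_le (half_pos hx0) (le_max_right _ _)
    have hyx : y < x := max_lt (by linarith) (by linarith)
    have hydist : dist y x < δ := by
      rw [Real.dist_eq, abs_of_nonpos (by linarith)]
      have : x - δ/2 ≤ y := le_max_left _ _
      linarith
    obtain ⟨i₂, hyi₂, hi₂x⟩ := hrdense y x hy0.le hyx hx1.le
    have hGy : G x - ε/3 < G y := by
      have := hδprop hydist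
      rw [Real.dist_eq] at this
      cases abs_cases (G y - G x) with
      | inl hc => linarith [hc.1]
      | inr hc => linarith [hc.1]
    have hLi₂ : G x - ε/3 < L i₂ := lt_of_lt_of_le hGy (hGa y i₂ hyi₂)
    have hev₁ := (Metric.tendsto_nhds.mp (htend i₁)) (ε/3) hε3
    have hev₂ := (Metric.tendsto_nhds.mp (htend i₂)) (ε/3) hε3
    filter_upwards [hev₁, hev₂] with j h₁ h₂
    rw [Real.dist_eq] at h₁ h₂ ⊢
    have b₁ : pp (σ j) x ≤ pp (σ j) (r i₁) := hppm (σ j) hi₁.le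
    have b₂ : pp (σ j) (r i₂) ≤ pp (σ j) x := hppm (σ j) hi₂x.le
    have c₁ : pp (σ j) (r i₁) < L i₁ + ε/3 := by
      cases abs_cases (pp (σ j) (r i₁) - L i₁) with
      | inl hc => linarith [hc.1]
      | inr hc => linarith [hc.1]
    have c₂ : L i₂ - ε/3 < pp (σ j) (r i₂) := by
      cases abs_cases (pp (σ j) (r i₂) - L i₂) with
      | inl hc => linarith [hc.1]
      | inr hc => linarith [hc.1]
    have hub : pp (σ j) x < G x + ε := by linarith
    have hlb : G x - ε < pp (σ j) x := by linarith
    cases abs_cases (pp (σ j) x - G x) with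
    | inl hc => linarith [hc.1]
    | inr hc => linarith [hc.1]
  -- exceptional set
  set Bad : Set ℝ :=
    ({x | ¬ContinuousAt GP x} ∪ {x | ¬ContinuousAt GQ x} ∪ {0}) \ {1} with hBaddef
  have hBadc : Bad.Countable :=
    (((hGPmono.countable_not_continuousAt).union hGQmono.countable_not_continuousAt).union
      (countable_singleton 0)).mono diff_subset
  have hconv1 : Tendsto (fun j => h (σ j) 1) atTop (𝓝 (f 1)) := by
    have e1 : GP 1 = Lp 0 := hGP1 1 (lt_irrefl 1)
    have e2 : GQ 1 = Lq 0 := hGQ1 1 (lt_irrefl 1)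
    have hp1 := hptend 0
    have hq1 := hqtend 0
    rw [hr0] at hp1 hq1
    have hf1 : f 1 = Lp 0 - Lq 0 := by show GP 1 - GQ 1 = _; rw [e1, e2]
    rw [hf1]
    exact (hp1.sub hq1).congr fun j => (hpq (σ j) 1).symm
  have hgoodconv : ∀ x ∈ Icc (0:ℝ) 1 \ Bad,
      Tendsto (fun j => h (σ j) x) atTop (𝓝 (f x)) := by
    rintro x ⟨hxI, hxB⟩
    by_cases hx1 : x = 1
    · rw [hx1]; exact hconv1
    · have hx1' : x < 1 := lt_of_le_of_ne hxI.2 hx1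
      have hnx : x ∉ ({x | ¬ContinuousAt GP x} ∪ {x | ¬ContinuousAt GQ x} ∪ {0} : Set ℝ) := by
        intro hmem
        exact hxB ⟨hmem, fun hx => hx1 hx⟩
      simp only [mem_union, mem_setOf_eq, mem_singleton_iff] at hnx
      push_neg at hnx
      have hP : ContinuousAt GP x := hnx.1.1
      have hQ : ContinuousAt GQ x := hnx.1.2
      have hx0 : 0 < x := lt_of_le_of_ne hxI.1 (Ne.symm hnx.2)
      have tp := hconvP GP Lp p hGPmono hpm hptend hGPa hGPapprox x hx0 hx1' hP
      have tq := hconvP GQ Lq q hGQmono hqm hqtend hGQa hGQapprox x hx0 hx1' hQ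
      exact (tp.sub tq).congr fun j => (hpq (σ j) x).symm
  have hfmeas : Measurable f := hGPmono.measurable.sub hGQmono.measurable
  have hfbdd : ∀ x, |f x| ≤ 2 * |K| := by
    intro x
    have h1 : |GP x| ≤ |K| :=
      abs_le.mpr ⟨by linarith [le_abs_self K, (hGPb x).1], by linarith [le_abs_self K, (hGPb x).2]⟩
    have h2 : |GQ x| ≤ |K| :=
      abs_le.mpr ⟨by linarith [le_abs_self K, (hGQb x).1], by linarith [le_abs_self K, (hGQb x).2]⟩
    show |GP x - GQ x| ≤ 2 * |K|
    calc |GP x - GQ x| = |GP x + -(GQ x)| := by rw [sub_eq_add_neg]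
      _ ≤ |GP x| + |-(GQ x)| := abs_add_le _ _
      _ = |GP x| + |GQ x| := by rw [abs_neg]
      _ ≤ |K| + |K| := add_le_add h1 h2
      _ = 2 * |K| := by ring
  refine ⟨f, σ, hσ, hfmeas, hfbdd, ⟨Bad, hBadc, hgoodconv⟩, ?_⟩
  intro c hc
  have e1 : eVariationOn f (Icc 0 1 \ Bad) ≤ c :=
    evar_le_of_tendsto hgoodconv
      (fun j => le_trans (eVariationOn.mono _ diff_subset) (hc (σ j)))
  refine le_trans (evar_le_of_right_dense ?_ ?_) e1
  · exact ⟨right_mem_Icc.2 zero_le_one, fun hbad => hbad.2 rfl⟩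
  · intro x hx ε hε b hb
    have hε2 : 0 < ε/2 := by linarith
    obtain ⟨i₁, hi₁, hLi₁⟩ := hGPapprox x hx.2 (ε/2) hε2
    obtain ⟨i₂, hi₂, hLi₂⟩ := hGQapprox x hx.2 (ε/2) hε2
    set w : ℝ := min b (min (r i₁) (r i₂)) with hwdef
    have hxw : x < w := lt_min hb (lt_min hi₁ hi₂)
    have hw1 : w ≤ 1 :=
      le_trans (le_trans (min_le_right _ _) (min_le_left _ _)) (hrmem i₁).2
    have hIoo : ¬ (Ioo x w ⊆ Bad) := by
      intro hsub
      have h1 : volume (Ioo x w) = 0 :=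
        le_antisymm
          (le_trans (measure_mono hsub) (le_of_eq (hBadc.measure_zero volume))) (by simp)
      rw [Real.volume_Ioo] at h1
      exact absurd h1 (ne_of_gt (ENNReal.ofReal_pos.mpr (by linarith)))
    obtain ⟨y, hyIoo, hyBad⟩ := not_subset.mp hIoo
    refine ⟨y, ⟨⟨le_of_lt (lt_of_le_of_lt hx.1 hyIoo.1),
      le_of_lt (lt_of_lt_of_le hyIoo.2 hw1)⟩, hyBad⟩,
      hyIoo.1, lt_of_lt_of_le hyIoo.2 (min_le_left _ _), ?_⟩
    have hyri₁ : y < r i₁ :=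
      lt_of_lt_of_le hyIoo.2 (le_trans (min_le_right _ _) (min_le_left _ _))
    have hyri₂ : y < r i₂ :=
      lt_of_lt_of_le hyIoo.2 (le_trans (min_le_right _ _) (min_le_right _ _))
    have dP1 : GP x ≤ GP y := hGPmono hyIoo.1.le
    have dP2 : GP y ≤ Lp i₁ := hGPa y i₁ hyri₁
    have dQ1 : GQ x ≤ GQ y := hGQmono hyIoo.1.le
    have dQ2 : GQ y ≤ Lq i₂ := hGQa y i₂ hyri₂
    have hkey : f y - f x = (GP y - GP x) - (GQ y - GQ x) := by
      show (GP y - GQ y) - (GP x - GQ x) = _; ring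
    rw [hkey, abs_le]
    exact ⟨by linarith, by linarith⟩

end helly

section measure

lemma nu_apply {v : ℝ → ℝ} (hi : Integrable v m) (hnn : 0 ≤ᵐ[m] v)
    {E : Set ℝ} (hE : MeasurableSet E) :
    m.withDensity (fun x => ENNReal.ofReal (v x)) E = ENNReal.ofReal (∫ x in E, v x ∂m) := by
  rw [withDensity_apply _ hE,
    ofReal_integral_eq_lintegral_ofReal hi.integrableOn (ae_restrict_of_ae hnn)]

lemma integral_nu {v : ℝ → ℝ} (hm : Measurable v) (hnn : 0 ≤ᵐ[m] v) (ψ : ℝ → ℝ) :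
    ∫ x, ψ x ∂(m.withDensity fun x => ENNReal.ofReal (v x)) = ∫ x, v x * ψ x ∂m := by
  have h1 : (fun x => ENNReal.ofReal (v x))
      = fun x => (((v x).toNNReal : ℝ≥0) : ℝ≥0∞) := rfl
  rw [h1, integral_withDensity_eq_integral_smul (f := fun x => (v x).toNNReal)
    hm.real_toNNReal]
  apply integral_congr_ae
  filter_upwards [hnn] with x hx
  simp [NNReal.smul_def, Real.coe_toNNReal _ hx]

lemma map_withDensity_eq {T v w : ℝ → ℝ} (hT : Measurable T)
    (hvi : Integrable v m) (hvnn : 0 ≤ᵐ[m] v)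
    (hwi : Integrable w m) (hwnn : 0 ≤ᵐ[m] w)
    (hFP : ∀ E : Set ℝ, MeasurableSet E → ∫ x in E, w x ∂m = ∫ x in T ⁻¹' E, v x ∂m) :
    Measure.map T (m.withDensity fun x => ENNReal.ofReal (v x))
      = m.withDensity fun x => ENNReal.ofReal (w x) := by
  ext E hE
  rw [Measure.map_apply hT hE, nu_apply hvi hvnn (hT hE), nu_apply hwi hwnn hE, hFP E hE]

lemma fp_duality {T v w : ℝ → ℝ} (hT : Measurable T)
    (hvm : Measurable v) (hvi : Integrable v m) (hvnn : 0 ≤ᵐ[m] v)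
    (hwm : Measurable w) (hwi : Integrable w m) (hwnn : 0 ≤ᵐ[m] w)
    (hFP : ∀ E : Set ℝ, MeasurableSet E → ∫ x in E, w x ∂m = ∫ x in T ⁻¹' E, v x ∂m)
    (φ : ℝ → ℝ) (hφ : Measurable φ) :
    ∫ x, v x * φ (T x) ∂m = ∫ x, w x * φ x ∂m := by
  have h1 := integral_nu hvm hvnn (fun x => φ (T x))
  have h2 := integral_nu hwm hwnn φ
  rw [← h1, ← h2, ← map_withDensity_eq hT hvi hvnn hwi hwnn hFP,
    integral_map hT.aemeasurable hφ.stronglyMeasurable.aestronglyMeasurable]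

lemma preimage_aeeq {μ : Measure ℝ} {f g : ℝ → ℝ} (h : f =ᵐ[μ] g) (E : Set ℝ) :
    f ⁻¹' E =ᵐ[μ] g ⁻¹' E := by
  rw [Filter.eventuallyEq_set]
  filter_upwards [h] with x hx
  simp only [Set.mem_preimage, hx]

lemma pointwise_bound {g : ℝ → ℝ} (hi : Integrable g m) (hint : ∫ x, g x ∂m = 1)
    {c : ℝ≥0∞} (hc : c ≠ ⊤) (hvar : eVariationOn g (Icc 0 1) ≤ c) :
    ∀ x ∈ Icc (0:ℝ) 1, |g x| ≤ 1 + c.toReal := by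
  have hBV : BoundedVariationOn g (Icc 0 1) := ne_top_of_le_ne_top hc hvar
  have hone : ∫ x, (1:ℝ) ∂m = 1 := by simp
  have hlow : ∃ x₀ ∈ Icc (0:ℝ) 1, g x₀ ≤ 1 := by
    by_contra hcon
    push_neg at hcon
    have hz : ∫ x, (g x - 1) ∂m = 0 := by
      rw [integral_sub hi (integrable_const 1), hone, hint]; ring
    have hnn2 : 0 ≤ᵐ[m] fun x => g x - 1 := by
      filter_upwards [ae_mem_Icc] with x hx
      simp only [Pi.zero_apply]
      linarith [hcon x hx]
    have hint2 : Integrable (fun x => g x - 1) m := hi.sub (integrable_const 1)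
    have h1 : (fun x => g x - 1) =ᵐ[m] 0 :=
      (integral_eq_zero_iff_of_nonneg_ae hnn2 hint2).mp hz
    have hFalse : ∀ᵐ _x ∂m, False := by
      filter_upwards [h1, ae_mem_Icc] with x h1x hx
      simp only [Pi.zero_apply] at h1x
      linarith [hcon x hx]
    exact (ae_neBot.mpr (IsProbabilityMeasure.ne_zero m)).ne
      (Filter.eventually_false_iff_eq_bot.mp hFalse)
  have hhigh : ∃ x₁ ∈ Icc (0:ℝ) 1, 1 ≤ g x₁ := by
    by_contra hcon
    push_neg at hcon
    have hz : ∫ x, ((1:ℝ) - g x) ∂m = 0 := by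
      rw [integral_sub (integrable_const 1) hi, hone, hint]; ring
    have hnn2 : 0 ≤ᵐ[m] fun x => (1:ℝ) - g x := by
      filter_upwards [ae_mem_Icc] with x hx
      simp only [Pi.zero_apply]
      linarith [hcon x hx]
    have hint2 : Integrable (fun x => (1:ℝ) - g x) m := (integrable_const 1).sub hi
    have h1 : (fun x => (1:ℝ) - g x) =ᵐ[m] 0 :=
      (integral_eq_zero_iff_of_nonneg_ae hnn2 hint2).mp hz
    have hFalse : ∀ᵐ _x ∂m, False := by
      filter_upwards [h1, ae_mem_Icc] with x h1x hx
      simp only [Pi.zero_apply] at h1x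
      linarith [hcon x hx]
    exact (ae_neBot.mpr (IsProbabilityMeasure.ne_zero m)).ne
      (Filter.eventually_false_iff_eq_bot.mp hFalse)
  obtain ⟨x₀, hx₀, hgx₀⟩ := hlow
  obtain ⟨x₁, hx₁, hgx₁⟩ := hhigh
  intro x hx
  have htr : (eVariationOn g (Icc 0 1)).toReal ≤ c.toReal := ENNReal.toReal_mono hc hvar
  have h1 : g x - g x₀ ≤ (eVariationOn g (Icc 0 1)).toReal := hBV.sub_le hx hx₀
  have h2 : g x₁ - g x ≤ (eVariationOn g (Icc 0 1)).toReal := hBV.sub_le hx₁ hx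
  rw [abs_le]
  exact ⟨by linarith, by linarith⟩

lemma LY_step {A B : ℝ} (hA0 : 0 ≤ A) (hA1 : A < 1) :
    ENNReal.ofReal A * ENNReal.ofReal (B / (1 - A)) + ENNReal.ofReal B
      ≤ ENNReal.ofReal (B / (1 - A)) := by
  rcases le_or_gt B 0 with hB | hB
  · have h1 : B / (1 - A) ≤ 0 := div_nonpos_iff.2 (Or.inr ⟨hB, by linarith⟩)
    rw [ENNReal.ofReal_of_nonpos h1, ENNReal.ofReal_of_nonpos hB]
    simp
  · have hA' : 0 < 1 - A := by linarith
    rw [← ENNReal.ofReal_mul hA0, ← ENNReal.ofReal_add (by positivity) hB.le]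
    apply ENNReal.ofReal_le_ofReal
    have heq : A * (B / (1 - A)) + B = B / (1 - A) := by
      field_simp
      ring
    linarith [heq]

end measure

section pe

lemma pe_aemeasurable {T : ℝ → ℝ} {s : ℝ} (h : PiecewiseExpanding T s) :
    AEMeasurable T m := by
  classical
  obtain ⟨r, a, hr, ha0, har, hlt, hpieces⟩ := h
  set V : ℕ → Set ℝ := fun i => if i < r then Ioo (a i) (a (i+1)) else ∅ with hVdef
  have hVae : ∀ i, AEMeasurable T (volume.restrict (V i)) := by
    intro i
    simp only [hVdef]
    split
    · rename_i hi
      exact ((hpieces i hi).2.1.continuousOn).aemeasurable measurableSet_Ioo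
    · rw [Measure.restrict_empty]
      exact aemeasurable_zero_measure
  have hcover : Icc (0:ℝ) 1 \ (⋃ i, V i) ⊆ a '' (Iic r) := by
    rintro x ⟨hxI, hxU⟩
    have h0mem : 0 ∈ (Finset.range (r+1)).filter (fun i => a i ≤ x) := by
      simp only [Finset.mem_filter, Finset.mem_range]
      exact ⟨by omega, by rw [ha0]; exact hxI.1⟩
    set F := (Finset.range (r+1)).filter (fun i => a i ≤ x) with hF
    have hFne : F.Nonempty := ⟨0, h0mem⟩
    set i₀ := F.max' hFne with hi₀
    have hi₀mem := F.max'_mem hFne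
    have hi₀r : i₀ ≤ r := by
      have := (Finset.mem_filter.mp hi₀mem).1
      rw [Finset.mem_range] at this
      omega
    have hi₀le : a i₀ ≤ x := (Finset.mem_filter.mp hi₀mem).2
    rcases eq_or_lt_of_le hi₀le with heq | hlt'
    · exact ⟨i₀, hi₀r, heq⟩
    · exfalso
      have hi₀r' : i₀ < r := by
        rcases eq_or_lt_of_le hi₀r with h | h
        · exfalso
          rw [h, har] at hlt'
          exact absurd hxI.2 (not_le.mpr hlt')
        · exact h
      have hnext : x < a (i₀+1) := by
        by_contra hc
        push_neg at hc
        have hmem2 : (i₀+1) ∈ F :=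
          Finset.mem_filter.mpr ⟨Finset.mem_range.mpr (by omega), hc⟩
        have := F.le_max' _ hmem2
        omega
      apply hxU
      apply mem_iUnion.mpr
      refine ⟨i₀, ?_⟩
      simp only [hVdef, if_pos hi₀r']
      exact ⟨hlt', hnext⟩
  have hnull : volume (Icc (0:ℝ) 1 \ (⋃ i, V i)) = 0 :=
    measure_mono_null hcover (((Set.finite_Iic r).image a).measure_zero volume)
  have hmle : m ≤ (Measure.sum fun i => volume.restrict (V i))
      + volume.restrict (Icc (0:ℝ) 1 \ (⋃ i, V i)) := by
    have h1 : m ≤ volume.restrict ((⋃ i, V i) ∪ (Icc (0:ℝ) 1 \ (⋃ i, V i))) := by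
      apply Measure.restrict_mono _ le_rfl
      intro x hx
      by_cases hxU : x ∈ ⋃ i, V i
      · exact Or.inl hxU
      · exact Or.inr ⟨hx, hxU⟩
    calc m ≤ _ := h1
      _ ≤ volume.restrict (⋃ i, V i) + volume.restrict (Icc (0:ℝ) 1 \ (⋃ i, V i)) :=
          Measure.restrict_union_le _ _
      _ ≤ _ := add_le_add Measure.restrict_iUnion_le le_rfl
  have hsum : AEMeasurable T ((Measure.sum fun i => volume.restrict (V i))
      + volume.restrict (Icc (0:ℝ) 1 \ (⋃ i, V i))) := by
    rw [aemeasurable_add_measure_iff]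
    constructor
    · rw [aemeasurable_sum_measure_iff]
      exact hVae
    · rw [Measure.restrict_eq_zero.mpr hnull]
      exact aemeasurable_zero_measure
  exact hsum.mono_measure hmle

end pe

section stage

lemma stage_exists
    {τn : ℝ → ℝ} (hτm : AEMeasurable τn m)
    {Pn : (ℝ → ℝ) → (ℝ → ℝ)}
    (hPn : ∀ g : ℝ → ℝ, Integrable g m → IsFPImage τn g (Pn g))
    {A B : ℝ} (hA0 : 0 ≤ A) (hA1 : A < 1)
    (hLYn : ∀ g : ℝ → ℝ, BoundedVariationOn g (Set.Icc 0 1) →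
      eVariationOn (Pn g) (Set.Icc 0 1) ≤
        ENNReal.ofReal A * eVariationOn g (Set.Icc 0 1)
          + ENNReal.ofReal (B * ∫ x, |g x| ∂m))
    (n : ℕ) (hn : 1 ≤ n) :
    ∃ v : ℝ → ℝ, Measurable v ∧ Integrable v m ∧ (0 ≤ᵐ[m] v) ∧ (∫ x, v x ∂m = 1) ∧
      eVariationOn v (Icc 0 1) ≤ ENNReal.ofReal (B / (1 - A)) ∧
      (∀ x, |v x| ≤ 1 + (ENNReal.ofReal (B / (1 - A))).toReal) ∧
      (∀ φ : ℝ → ℝ, Measurable φ → (∀ y, |φ y| ≤ 1) →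
        |(∫ x, φ (τn x) * v x ∂m) - ∫ x, φ x * v x ∂m| ≤ 2 / n) := by
  classical
  set C : ℝ≥0∞ := ENNReal.ofReal (B / (1 - A)) with hC
  have hCne : C ≠ ⊤ := ENNReal.ofReal_ne_top
  set W : ℕ → ℝ → ℝ :=
    fun k => Nat.rec (motive := fun _ => ℝ → ℝ) (fun _ => (1:ℝ))
      (fun _ w => fun x => Pn w (cl x)) k with hWdef
  have hW0 : W 0 = fun _ => (1:ℝ) := rfl
  have hWsucc : ∀ k, W (k+1) = fun x => Pn (W k) (cl x) := fun _ => rfl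
  have hNice : ∀ k, Measurable (W k) ∧ Integrable (W k) m ∧ (0 ≤ᵐ[m] W k)
      ∧ (∫ x, W k x ∂m = 1) ∧ eVariationOn (W k) (Icc 0 1) ≤ C := by
    intro k
    induction k with
    | zero =>
      rw [hW0]
      refine ⟨measurable_const, integrable_const 1,
        Eventually.of_forall (fun _ => zero_le_one), by simp, ?_⟩
      rw [evar_const]
      exact by simp
    | succ k ih =>
      obtain ⟨hm, hi, hnn, hint, hvar⟩ := ih
      have hBVk : BoundedVariationOn (W k) (Icc 0 1) := ne_top_of_le_ne_top hCne hvar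
      have hFP := hPn (W k) hi
      have habs : ∫ x, |W k x| ∂m = 1 := by
        rw [← hint]
        apply integral_congr_ae
        filter_upwards [hnn] with x hx
        exact abs_of_nonneg hx
      have hvarP : eVariationOn (Pn (W k)) (Icc 0 1) ≤ C := by
        calc eVariationOn (Pn (W k)) (Icc 0 1)
            ≤ ENNReal.ofReal A * eVariationOn (W k) (Icc 0 1)
              + ENNReal.ofReal (B * ∫ x, |W k x| ∂m) := hLYn _ hBVk
          _ = ENNReal.ofReal A * eVariationOn (W k) (Icc 0 1) + ENNReal.ofReal B := by
              rw [habs, mul_one]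
          _ ≤ ENNReal.ofReal A * C + ENNReal.ofReal B :=
              add_le_add (mul_le_mul_right hvar _) le_rfl
          _ ≤ C := LY_step hA0 hA1
      have hBVP : BoundedVariationOn (Pn (W k)) (Icc 0 1) := ne_top_of_le_ne_top hCne hvarP
      have hmeas' : Measurable (W (k+1)) := by
        rw [hWsucc]; exact bv_measurable_comp_cl hBVP
      have hint'' : Integrable (W (k+1)) m := by
        rw [hWsucc]; exact bv_integrable_comp_cl hBVP
      have haeeq : W (k+1) =ᵐ[m] Pn (W k) := by
        rw [hWsucc]; exact bv_ae_eq_comp_cl.symm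
      have hvar' : eVariationOn (W (k+1)) (Icc 0 1) ≤ C := by
        rw [hWsucc, evar_comp_cl]
        exact hvarP
      have hintP : Integrable (Pn (W k)) m := hint''.congr haeeq
      have hI1 : ∫ x, W (k+1) x ∂m = 1 := by
        rw [integral_congr_ae haeeq]
        have h1 := hFP Set.univ MeasurableSet.univ
        rw [Set.preimage_univ, Measure.restrict_univ] at h1
        rw [h1, hint]
      have hnnP : 0 ≤ᵐ[m] Pn (W k) := by
        apply ae_nonneg_of_forall_setIntegral_nonneg hintP
        intro S hS _
        rw [hFP S hS]
        exact integral_nonneg_of_ae (ae_restrict_of_ae hnn)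
      have hnn' : 0 ≤ᵐ[m] W (k+1) := by
        filter_upwards [haeeq, hnnP] with x h1 h2
        rw [h1]; exact h2
      exact ⟨hmeas', hint'', hnn', hI1, hvar'⟩
  have hFPW : ∀ k (E : Set ℝ), MeasurableSet E →
      ∫ x in E, W (k+1) x ∂m = ∫ x in τn ⁻¹' E, W k x ∂m := by
    intro k E hE
    have haeeq : W (k+1) =ᵐ[m] Pn (W k) := by rw [hWsucc]; exact bv_ae_eq_comp_cl.symm
    rw [integral_congr_ae (ae_restrict_of_ae haeeq)]
    exact hPn (W k) (hNice k).2.1 E hE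
  set T : ℝ → ℝ := hτm.mk τn with hT
  have hTmeas : Measurable T := hτm.measurable_mk
  have hTae : τn =ᵐ[m] T := hτm.ae_eq_mk
  have hFPT : ∀ k (E : Set ℝ), MeasurableSet E →
      ∫ x in E, W (k+1) x ∂m = ∫ x in T ⁻¹' E, W k x ∂m := by
    intro k E hE
    rw [hFPW k E hE]
    exact setIntegral_congr_set (preimage_aeeq hTae E)
  have hKEY : ∀ k (φ : ℝ → ℝ), Measurable φ →
      ∫ x, W k x * φ (τn x) ∂m = ∫ x, W (k+1) x * φ x ∂m := by
    intro k φ hφ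
    have h1 : ∫ x, W k x * φ (τn x) ∂m = ∫ x, W k x * φ (T x) ∂m := by
      apply integral_congr_ae
      filter_upwards [hTae] with x hx
      rw [hx]
    rw [h1]
    exact fp_duality hTmeas (hNice k).1 (hNice k).2.1 (hNice k).2.2.1
      (hNice (k+1)).1 (hNice (k+1)).2.1 (hNice (k+1)).2.2.1 (hFPT k) φ hφ
  set v : ℝ → ℝ := fun x => (n:ℝ)⁻¹ * ∑ k ∈ Finset.range n, W k x with hv
  have hn0 : (0:ℝ) < n := by exact_mod_cast hn
  have hvmeas : Measurable v :=
    (Finset.measurable_sum _ fun k _ => (hNice k).1).const_mul _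
  have hsumint : Integrable (fun x => ∑ k ∈ Finset.range n, W k x) m :=
    integrable_finset_sum _ fun k _ => (hNice k).2.1
  have hvint : Integrable v m := hsumint.const_mul _
  have hvnn : 0 ≤ᵐ[m] v := by
    have hall : ∀ᵐ x ∂m, ∀ k, 0 ≤ W k x := ae_all_iff.mpr fun k => (hNice k).2.2.1
    filter_upwards [hall] with x hx
    exact mul_nonneg (by positivity) (Finset.sum_nonneg fun k _ => hx k)
  have hvint1 : ∫ x, v x ∂m = 1 := by
    rw [hv]
    rw [integral_const_mul, integral_finset_sum _ (fun k _ => (hNice k).2.1),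
      Finset.sum_congr rfl (fun k _ => (hNice k).2.2.2.1),
      Finset.sum_const, Finset.card_range, nsmul_eq_mul, mul_one]
    field_simp
  have hvvar : eVariationOn v (Icc 0 1) ≤ C := by
    calc eVariationOn v (Icc 0 1)
        ≤ ENNReal.ofReal (n:ℝ)⁻¹
          * eVariationOn (fun x => ∑ k ∈ Finset.range n, W k x) (Icc 0 1) :=
          evar_const_mul_le (by positivity) _ _
      _ ≤ ENNReal.ofReal (n:ℝ)⁻¹ * ∑ k ∈ Finset.range n, eVariationOn (W k) (Icc 0 1) :=
          mul_le_mul_right (evar_finset_sum_le _ _ _) _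
      _ ≤ ENNReal.ofReal (n:ℝ)⁻¹ * ∑ _k ∈ Finset.range n, C :=
          mul_le_mul_right (Finset.sum_le_sum fun k _ => (hNice k).2.2.2.2) _
      _ = (ENNReal.ofReal (n:ℝ)⁻¹ * (n:ℝ≥0∞)) * C := by
          rw [Finset.sum_const, Finset.card_range, nsmul_eq_mul, mul_assoc]
      _ = 1 * C := by
          rw [← ENNReal.ofReal_natCast, ← ENNReal.ofReal_mul (by positivity),
            inv_mul_cancel₀ (ne_of_gt hn0), ENNReal.ofReal_one]
      _ = C := one_mul C
  have hvbdd : ∀ x ∈ Icc (0:ℝ) 1, |v x| ≤ 1 + C.toReal :=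
    pointwise_bound hvint hvint1 hCne hvvar
  have hdefect : ∀ φ : ℝ → ℝ, Measurable φ → (∀ y, |φ y| ≤ 1) →
      |(∫ x, φ (τn x) * v x ∂m) - ∫ x, φ x * v x ∂m| ≤ 2 / n := by
    intro φ hφm hφb
    have hφτsm : AEStronglyMeasurable (fun x => φ (τn x)) m :=
      (hφm.comp_aemeasurable hτm).aestronglyMeasurable
    have hφsm : AEStronglyMeasurable φ m := hφm.aestronglyMeasurable
    have hIk : ∀ k, Integrable (fun x => φ (τn x) * W k x) m := fun k =>
      Integrable.bdd_mul (hNice k).2.1 hφτsm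
        (Eventually.of_forall fun x => by rw [Real.norm_eq_abs]; exact hφb _)
    have hIk' : ∀ k, Integrable (fun x => φ x * W k x) m := fun k =>
      Integrable.bdd_mul (hNice k).2.1 hφsm
        (Eventually.of_forall fun x => by rw [Real.norm_eq_abs]; exact hφb _)
    set a : ℕ → ℝ := fun k => ∫ x, W k x * φ x ∂m with ha
    have hak : ∀ k, |a k| ≤ 1 := by
      intro k
      have h1 : |a k| ≤ ∫ x, |W k x * φ x| ∂m := by
        rw [ha]
        calc |∫ x, W k x * φ x ∂m| = ‖∫ x, W k x * φ x ∂m‖ := (Real.norm_eq_abs _).symm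
          _ ≤ ∫ x, ‖W k x * φ x‖ ∂m := norm_integral_le_integral_norm _
          _ = ∫ x, |W k x * φ x| ∂m := rfl
      have h2 : ∫ x, |W k x * φ x| ∂m ≤ ∫ x, W k x ∂m := by
        apply integral_mono_of_nonneg (Eventually.of_forall fun x => abs_nonneg _)
          (hNice k).2.1
        filter_upwards [(hNice k).2.2.1] with x hx
        calc |W k x * φ x| = |W k x| * |φ x| := abs_mul _ _
          _ ≤ |W k x| * 1 := mul_le_mul_of_nonneg_left (hφb x) (abs_nonneg _)
          _ = |W k x| := mul_one _
          _ = W k x := abs_of_nonneg hx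
      calc |a k| ≤ ∫ x, W k x ∂m := le_trans h1 h2
        _ = 1 := (hNice k).2.2.2.1
    have e1 : ∫ x, φ (τn x) * v x ∂m
        = (n:ℝ)⁻¹ * ∑ k ∈ Finset.range n, a (k+1) := by
      calc ∫ x, φ (τn x) * v x ∂m
          = ∫ x, (n:ℝ)⁻¹ * (∑ k ∈ Finset.range n, φ (τn x) * W k x) ∂m := by
            apply integral_congr_ae
            apply Eventually.of_forall
            intro x
            show φ (τn x) * v x = _
            simp only [hv, ← Finset.mul_sum]
            ring
        _ = (n:ℝ)⁻¹ * ∫ x, ∑ k ∈ Finset.range n, φ (τn x) * W k x ∂m := integral_const_mul _ _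
        _ = (n:ℝ)⁻¹ * ∑ k ∈ Finset.range n, ∫ x, φ (τn x) * W k x ∂m := by
            rw [integral_finset_sum _ (fun k _ => hIk k)]
        _ = (n:ℝ)⁻¹ * ∑ k ∈ Finset.range n, a (k+1) := by
            congr 1
            apply Finset.sum_congr rfl
            intro k _
            have hcomm : ∫ x, φ (τn x) * W k x ∂m = ∫ x, W k x * φ (τn x) ∂m := by
              apply integral_congr_ae
              exact Eventually.of_forall fun x => mul_comm _ _
            rw [hcomm, hKEY k φ hφm]
    have e2 : ∫ x, φ x * v x ∂m = (n:ℝ)⁻¹ * ∑ k ∈ Finset.range n, a k := by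
      calc ∫ x, φ x * v x ∂m
          = ∫ x, (n:ℝ)⁻¹ * (∑ k ∈ Finset.range n, φ x * W k x) ∂m := by
            apply integral_congr_ae
            apply Eventually.of_forall
            intro x
            show φ x * v x = _
            simp only [hv, ← Finset.mul_sum]
            ring
        _ = (n:ℝ)⁻¹ * ∫ x, ∑ k ∈ Finset.range n, φ x * W k x ∂m := integral_const_mul _ _
        _ = (n:ℝ)⁻¹ * ∑ k ∈ Finset.range n, ∫ x, φ x * W k x ∂m := by
            rw [integral_finset_sum _ (fun k _ => hIk' k)]
        _ = (n:ℝ)⁻¹ * ∑ k ∈ Finset.range n, a k := by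
            congr 1
            apply Finset.sum_congr rfl
            intro k _
            apply integral_congr_ae
            exact Eventually.of_forall fun x => mul_comm _ _
    rw [e1, e2, ← mul_sub, ← Finset.sum_sub_distrib, Finset.sum_range_sub (f := a)]
    rw [abs_mul, abs_of_nonneg (by positivity : (0:ℝ) ≤ (n:ℝ)⁻¹)]
    have habs2 : |a n - a 0| ≤ 2 := by
      calc |a n - a 0| = |a n + -(a 0)| := by rw [sub_eq_add_neg]
        _ ≤ |a n| + |-(a 0)| := abs_add_le _ _
        _ = |a n| + |a 0| := by rw [abs_neg]
        _ ≤ 1 + 1 := add_le_add (hak n) (hak 0)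
        _ = 2 := by norm_num
    calc (n:ℝ)⁻¹ * |a n - a 0| ≤ (n:ℝ)⁻¹ * 2 :=
        mul_le_mul_of_nonneg_left habs2 (by positivity)
      _ = 2 / n := by rw [div_eq_inv_mul]
  refine ⟨fun x => v (cl x), hvmeas.comp cl_continuous.measurable,
    hvint.congr bv_ae_eq_comp_cl, ?_, ?_, ?_, ?_, ?_⟩
  · filter_upwards [hvnn, bv_ae_eq_comp_cl (f := v)] with x h1 h2
    rw [← h2]; exact h1
  · rw [← integral_congr_ae (bv_ae_eq_comp_cl (f := v))]; exact hvint1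
  · rw [evar_comp_cl]; exact hvvar
  · exact fun x => hvbdd _ (cl_mem x)
  · intro φ hφm hφb
    have h1 : ∫ x, φ (τn x) * v (cl x) ∂m = ∫ x, φ (τn x) * v x ∂m := by
      apply integral_congr_ae
      filter_upwards [bv_ae_eq_comp_cl (f := v)] with x hx
      rw [← hx]
    have h2 : ∫ x, φ x * v (cl x) ∂m = ∫ x, φ x * v x ∂m := by
      apply integral_congr_ae
      filter_upwards [bv_ae_eq_comp_cl (f := v)] with x hx
      rw [← hx]
    rw [h1, h2]
    exact hdefect φ hφm hφb

end stage

end ACIM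

open Set ACIM

set_option maxHeartbeats 1000000 in
/-- If piecewise expanding maps `τ_n` converge uniformly to `τ` on `[0,1]` and their
Frobenius–Perron operators satisfy a common Lasota–Yorke inequality with constants
`0 ≤ A < 1` and `B`, then `τ` admits an absolutely continuous invariant probability
measure whose density is of bounded variation with `V(f*) ≤ B/(1−A)`. -/
theorem limit_map_admits_acim
    (s : ℝ) (hs : 1 < s)
    (τseq : ℕ → ℝ → ℝ) (τ : ℝ → ℝ)
    (hpe : ∀ n, 1 ≤ n → PiecewiseExpanding (τseq n) s)
    (hconv : TendstoUniformlyOn τseq τ atTop (Set.Icc 0 1))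
    (P : ℕ → (ℝ → ℝ) → (ℝ → ℝ))
    (hP : ∀ n, 1 ≤ n → ∀ g : ℝ → ℝ, Integrable g m → IsFPImage (τseq n) g (P n g))
    (A B : ℝ) (hA0 : 0 ≤ A) (hA1 : A < 1)
    (hLY : ∀ n, 1 ≤ n → ∀ g : ℝ → ℝ, BoundedVariationOn g (Set.Icc 0 1) →
      eVariationOn (P n g) (Set.Icc 0 1) ≤
        ENNReal.ofReal A * eVariationOn g (Set.Icc 0 1)
          + ENNReal.ofReal (B * ∫ x, |g x| ∂m)) :
    ∃ μ : Measure ℝ, IsProbabilityMeasure μ ∧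
      (∀ E : Set ℝ, MeasurableSet E → μ (τ ⁻¹' E) = μ E) ∧
      μ ≪ m ∧
      ∃ fstar : ℝ → ℝ,
        μ = m.withDensity (fun x => ENNReal.ofReal (fstar x)) ∧
        BoundedVariationOn fstar (Set.Icc 0 1) ∧
        eVariationOn fstar (Set.Icc 0 1) ≤ ENNReal.ofReal (B / (1 - A)) := by
  classical
  set C : ℝ≥0∞ := ENNReal.ofReal (B / (1 - A)) with hC
  have hCne : C ≠ ⊤ := ENNReal.ofReal_ne_top
  -- stage densities
  have hstage : ∀ j : ℕ, ∃ v : ℝ → ℝ, Measurable v ∧ Integrable v m ∧ (0 ≤ᵐ[m] v)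
      ∧ (∫ x, v x ∂m = 1) ∧ eVariationOn v (Set.Icc 0 1) ≤ C
      ∧ (∀ x, |v x| ≤ 1 + C.toReal)
      ∧ (∀ φ : ℝ → ℝ, Measurable φ → (∀ y, |φ y| ≤ 1) →
          |(∫ x, φ (τseq (j+1) x) * v x ∂m) - ∫ x, φ x * v x ∂m| ≤ 2 / ((j+1 : ℕ) : ℝ)) := by
    intro j
    have hj1 : 1 ≤ j + 1 := Nat.le_add_left 1 j
    exact stage_exists (pe_aemeasurable (hpe (j+1) hj1))
      (fun g hg => hP (j+1) hj1 g hg) hA0 hA1 (fun g hg => hLY (j+1) hj1 g hg) (j+1) hj1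
  choose sv hsvmeas hsvint hsvnn hsvint1 hsvvar hsvbdd hsvdef using hstage
  set M : ℝ := 1 + C.toReal with hM
  have hM0 : 0 < M := by positivity
  set hh : ℕ → ℝ → ℝ := fun j x => sv j (cl x) with hhdef
  have hBVj : ∀ j, BoundedVariationOn (sv j) (Icc 0 1) :=
    fun j => ne_top_of_le_ne_top hCne (hsvvar j)
  have hhvar : ∀ j, eVariationOn (hh j) (Icc 0 1) ≤ C := by
    intro j
    rw [hhdef]
    rw [evar_comp_cl]
    exact hsvvar j
  have hhae : ∀ j, hh j =ᵐ[m] sv j := fun j => (bv_ae_eq_comp_cl (f := sv j)).symm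
  have hhbdd : ∀ j x, |hh j x| ≤ M := fun j x => hsvbdd j (cl x)
  -- monotone decompositions, uniformly bounded
  have hdec : ∀ j, ∃ pq : (ℝ → ℝ) × (ℝ → ℝ), Monotone pq.1 ∧ Monotone pq.2 ∧
      (∀ x, hh j x = pq.1 x - pq.2 x) ∧
      (∀ x, pq.1 x ∈ Icc (-(C.toReal + M)) (C.toReal + M)) ∧
      (∀ x, pq.2 x ∈ Icc (-(C.toReal + M)) (C.toReal + M)) := by
    intro j
    obtain ⟨p, q, hp, hq, hfpq, hpb⟩ := bv_decomp (hBVj j)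
    have hCt : (0:ℝ) ≤ C.toReal := ENNReal.toReal_nonneg
    have h3 : (eVariationOn (sv j) (Icc 0 1)).toReal ≤ C.toReal :=
      ENNReal.toReal_mono hCne (hsvvar j)
    refine ⟨(p, q), hp, hq, fun x => hfpq x, fun x => ?_, fun x => ?_⟩
    · show p x ∈ Icc _ _
      exact ⟨by linarith [(hpb x).1], by linarith [(hpb x).2]⟩
    · show q x ∈ Icc _ _
      have h4 : |sv j (cl x)| ≤ M := hsvbdd j (cl x)
      rw [abs_le] at h4
      have h5 : q x = p x - sv j (cl x) := by rw [hfpq x]; ring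
      constructor
      · rw [h5]; linarith [(hpb x).1, h4.2]
      · rw [h5]; linarith [(hpb x).2, h4.1]
  choose PQ hPm hQm hPQ hPb hQb using hdec
  obtain ⟨fstar, σ, hσ, hfmeas, hfbdd, ⟨Bad, hBadc, hBadconv⟩, hfvar⟩ :=
    helly_select hh (fun j => (PQ j).1) (fun j => (PQ j).2) (C.toReal + M)
      hPm hQm hPb hQb hPQ
  have hfvarC : eVariationOn fstar (Icc 0 1) ≤ C := hfvar C hhvar
  -- a.e. convergence along the subsequence
  have haeGood : ∀ᵐ x ∂m, x ∈ Icc (0:ℝ) 1 \ Bad := by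
    have hnB : ∀ᵐ x ∂m, x ∉ Bad := compl_mem_ae_iff.mpr (m_null_of_countable hBadc)
    filter_upwards [ae_mem_Icc, hnB] with x h1 h2
    exact ⟨h1, h2⟩
  have hconvae : ∀ᵐ x ∂m, Tendsto (fun j => hh (σ j) x) atTop (𝓝 (fstar x)) := by
    filter_upwards [haeGood] with x hx
    exact hBadconv x hx
  set K2 : ℝ := 2 * |C.toReal + M| with hK2
  have hfint : Integrable fstar m := by
    refine Integrable.mono' (integrable_const K2) hfmeas.aestronglyMeasurable ?_
    exact Eventually.of_forall fun x => by rw [Real.norm_eq_abs]; exact hfbdd x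
  have hjint : ∀ j, Integrable (hh j) m := fun j => (hsvint j).congr (hhae j).symm
  have hL1 : Tendsto (fun j => ∫ x, |hh (σ j) x - fstar x| ∂m) atTop (𝓝 0) := by
    have h0 : ∫ x, (0:ℝ) ∂m = 0 := by simp
    rw [← h0]
    apply tendsto_integral_of_dominated_convergence (bound := fun _ => M + K2)
    · exact fun j => ((hjint (σ j)).sub hfint).abs.aestronglyMeasurable
    · exact integrable_const _
    · intro j
      apply Eventually.of_forall
      intro x
      rw [Real.norm_eq_abs, abs_abs]
      calc |hh (σ j) x - fstar x| = |hh (σ j) x + -(fstar x)| := by rw [sub_eq_add_neg]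
        _ ≤ |hh (σ j) x| + |-(fstar x)| := abs_add_le _ _
        _ = |hh (σ j) x| + |fstar x| := by rw [abs_neg]
        _ ≤ M + K2 := add_le_add (hhbdd (σ j) x) (hfbdd x)
    · filter_upwards [hconvae] with x hx
      have h1 : Tendsto (fun j => hh (σ j) x - fstar x) atTop (𝓝 (fstar x - fstar x)) :=
        hx.sub tendsto_const_nhds
      rw [sub_self] at h1
      have := h1.abs
      rwa [abs_zero] at this
  have hfint1 : ∫ x, fstar x ∂m = 1 := by
    have ht : Tendsto (fun j => ∫ x, hh (σ j) x ∂m) atTop (𝓝 (∫ x, fstar x ∂m)) := by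
      apply tendsto_integral_of_dominated_convergence (bound := fun _ => M)
      · exact fun j => (hjint (σ j)).aestronglyMeasurable
      · exact integrable_const _
      · intro j
        exact Eventually.of_forall fun x => by rw [Real.norm_eq_abs]; exact hhbdd (σ j) x
      · exact hconvae
    have hconst : ∀ j, ∫ x, hh (σ j) x ∂m = 1 := fun j => by
      rw [integral_congr_ae (hhae (σ j))]
      exact hsvint1 (σ j)
    exact tendsto_nhds_unique ((tendsto_congr hconst).mp ht) tendsto_const_nhds
  have hfnn : 0 ≤ᵐ[m] fstar := by
    have hall : ∀ᵐ x ∂m, ∀ j, 0 ≤ hh j x := by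
      apply ae_all_iff.mpr
      intro j
      filter_upwards [hsvnn j, hhae j] with x h1 h2
      rw [h2]; exact h1
    filter_upwards [hall, hconvae] with x h1 h2
    exact le_of_tendsto_of_tendsto' tendsto_const_nhds h2 fun j => h1 (σ j)
  -- a measurable version of τ
  have hτae : AEMeasurable τ m := by
    apply aemeasurable_of_tendsto_metrizable_ae atTop
      (fun n => pe_aemeasurable (hpe (n+1) (Nat.le_add_left 1 n)))
    filter_upwards [ae_mem_Icc] with x hx
    exact (hconv.tendsto_at hx).comp (tendsto_add_atTop_nat 1)
  set T := hτae.mk τ with hTdef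
  have hTmeas : Measurable T := hτae.measurable_mk
  have hTae : τ =ᵐ[m] T := hτae.ae_eq_mk
  set μ : Measure ℝ := m.withDensity (fun x => ENNReal.ofReal (fstar x)) with hμ
  have hμm : μ ≪ m := withDensity_absolutelyContinuous _ _
  have hprob : IsProbabilityMeasure μ := by
    constructor
    rw [hμ, nu_apply hfint hfnn MeasurableSet.univ, Measure.restrict_univ, hfint1]
    exact ENNReal.ofReal_one
  -- invariance tested against Lipschitz functions
  have hINV : ∀ (L : ℝ) (φ : ℝ → ℝ), 0 ≤ L → Measurable φ → (∀ y, |φ y| ≤ 1) →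
      (∀ u w : ℝ, |φ u - φ w| ≤ L * |u - w|) →
      ∫ x, φ (T x) * fstar x ∂m = ∫ x, φ x * fstar x ∂m := by
    intro L φ hL hφm hφb hφLip
    have hTτ : ∫ x, φ (T x) * fstar x ∂m = ∫ x, φ (τ x) * fstar x ∂m := by
      apply integral_congr_ae
      filter_upwards [hTae] with x hx
      rw [hx]
    rw [hTτ]
    set D : ℝ := (∫ x, φ (τ x) * fstar x ∂m) - ∫ x, φ x * fstar x ∂m with hD
    have hφsm : AEStronglyMeasurable φ m := hφm.aestronglyMeasurable
    have hφτsm : AEStronglyMeasurable (fun x => φ (τ x)) m :=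
      (hφm.comp_aemeasurable hτae).aestronglyMeasurable
    have hφb' : ∀ᵐ x ∂m, ‖φ (τ x)‖ ≤ 1 :=
      Eventually.of_forall fun x => by rw [Real.norm_eq_abs]; exact hφb _
    have hIf1 : Integrable (fun x => φ (τ x) * fstar x) m :=
      Integrable.bdd_mul hfint hφτsm hφb'
    have hIf2 : Integrable (fun x => φ x * fstar x) m :=
      Integrable.bdd_mul hfint hφsm
        (Eventually.of_forall fun x => by rw [Real.norm_eq_abs]; exact hφb _)
    have hDbound : ∀ ε > (0:ℝ), |D| ≤ ε := by
      intro ε hε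
      set δ : ℝ := ε / (4 * (L * M + 1)) with hδdef
      have hLM : 0 < L * M + 1 := by nlinarith [hM0]
      have hδ : 0 < δ := by positivity
      have Ev1 : ∀ᶠ j in atTop, ∫ x, |hh (σ j) x - fstar x| ∂m < ε / 4 :=
        hL1.eventually_lt_const (by linarith)
      have Ev2 : ∀ᶠ j in atTop, ∀ x ∈ Icc (0:ℝ) 1,
          dist (τ x) (τseq (σ j + 1) x) < δ := by
        have htends : Tendsto (fun j => σ j + 1) atTop atTop :=
          (tendsto_add_atTop_nat 1).comp hσ.tendsto_atTop
        exact htends.eventually (Metric.tendstoUniformlyOn_iff.mp hconv δ hδ)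
      have Ev3 : ∀ᶠ j in atTop, (2:ℝ) / ((σ j + 1 : ℕ) : ℝ) ≤ ε / 4 := by
        have hbase : Tendsto (fun j : ℕ => (2:ℝ) / ((j + 1 : ℕ) : ℝ)) atTop (𝓝 0) :=
          (tendsto_const_div_atTop_nhds_zero_nat 2).comp (tendsto_add_atTop_nat 1)
        have h1 : ∀ᶠ j in atTop, (2:ℝ) / ((j + 1 : ℕ) : ℝ) < ε / 4 :=
          hbase.eventually_lt_const (by linarith)
        filter_upwards [h1] with j hj
        have hcast : ((j + 1 : ℕ) : ℝ) ≤ ((σ j + 1 : ℕ) : ℝ) := by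
          exact_mod_cast Nat.add_le_add_right hσ.le_apply 1
        have hpos : (0:ℝ) < ((j + 1 : ℕ) : ℝ) := by positivity
        calc (2:ℝ) / ((σ j + 1 : ℕ) : ℝ) ≤ (2:ℝ) / ((j + 1 : ℕ) : ℝ) := by
              apply div_le_div_of_nonneg_left (by norm_num) hpos hcast
          _ ≤ ε / 4 := hj.le
      obtain ⟨j, hjj⟩ := (Ev1.and (Ev2.and Ev3)).exists
      obtain ⟨hj1, hj2, hj3⟩ := hjj
      set n : ℕ := σ j + 1 with hn
      set g : ℝ → ℝ := hh (σ j) with hg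
      have hgint : Integrable g m := hjint (σ j)
      have hτnae : AEMeasurable (τseq n) m :=
        pe_aemeasurable (hpe n (Nat.le_add_left 1 (σ j)))
      have hφτnsm : AEStronglyMeasurable (fun x => φ (τseq n x)) m :=
        (hφm.comp_aemeasurable hτnae).aestronglyMeasurable
      have hIg1 : Integrable (fun x => φ (τ x) * g x) m :=
        Integrable.bdd_mul hgint hφτsm hφb'
      have hIg2 : Integrable (fun x => φ (τseq n x) * g x) m :=
        Integrable.bdd_mul hgint hφτnsm
          (Eventually.of_forall fun x => by rw [Real.norm_eq_abs]; exact hφb _)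
      have hIg3 : Integrable (fun x => φ x * g x) m :=
        Integrable.bdd_mul hgint hφsm
          (Eventually.of_forall fun x => by rw [Real.norm_eq_abs]; exact hφb _)
      have hIdiff : Integrable (fun x => |g x - fstar x|) m := ((hgint.sub hfint)).abs
      have ht1 : |(∫ x, φ (τ x) * fstar x ∂m) - ∫ x, φ (τ x) * g x ∂m| ≤ ε / 4 := by
        rw [← integral_sub hIf1 hIg1]
        calc |∫ x, (φ (τ x) * fstar x - φ (τ x) * g x) ∂m|
            = ‖∫ x, (φ (τ x) * fstar x - φ (τ x) * g x) ∂m‖ := (Real.norm_eq_abs _).symm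
          _ ≤ ∫ x, ‖φ (τ x) * fstar x - φ (τ x) * g x‖ ∂m := norm_integral_le_integral_norm _
          _ ≤ ∫ x, |g x - fstar x| ∂m := by
              apply integral_mono_of_nonneg (Eventually.of_forall fun x => norm_nonneg _) hIdiff
              apply Eventually.of_forall
              intro x
              show ‖φ (τ x) * fstar x - φ (τ x) * g x‖ ≤ |g x - fstar x|
              rw [Real.norm_eq_abs]
              calc |φ (τ x) * fstar x - φ (τ x) * g x| = |φ (τ x)| * |fstar x - g x| := by
                    rw [← abs_mul, mul_sub]
                _ ≤ 1 * |fstar x - g x| :=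
                    mul_le_mul_of_nonneg_right (hφb _) (abs_nonneg _)
                _ = |g x - fstar x| := by rw [one_mul, abs_sub_comm]
          _ ≤ ε / 4 := hj1.le
      have ht4 : |(∫ x, φ x * g x ∂m) - ∫ x, φ x * fstar x ∂m| ≤ ε / 4 := by
        rw [← integral_sub hIg3 hIf2]
        calc |∫ x, (φ x * g x - φ x * fstar x) ∂m|
            = ‖∫ x, (φ x * g x - φ x * fstar x) ∂m‖ := (Real.norm_eq_abs _).symm
          _ ≤ ∫ x, ‖φ x * g x - φ x * fstar x‖ ∂m := norm_integral_le_integral_norm _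
          _ ≤ ∫ x, |g x - fstar x| ∂m := by
              apply integral_mono_of_nonneg (Eventually.of_forall fun x => norm_nonneg _) hIdiff
              apply Eventually.of_forall
              intro x
              show ‖φ x * g x - φ x * fstar x‖ ≤ |g x - fstar x|
              rw [Real.norm_eq_abs]
              calc |φ x * g x - φ x * fstar x| = |φ x| * |g x - fstar x| := by
                    rw [← abs_mul, mul_sub]
                _ ≤ 1 * |g x - fstar x| :=
                    mul_le_mul_of_nonneg_right (hφb _) (abs_nonneg _)
                _ = |g x - fstar x| := one_mul _
          _ ≤ ε / 4 := hj1.le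
      have ht2 : |(∫ x, φ (τ x) * g x ∂m) - ∫ x, φ (τseq n x) * g x ∂m| ≤ ε / 4 := by
        rw [← integral_sub hIg1 hIg2]
        have hptbound : ∀ᵐ x ∂m, ‖φ (τ x) * g x - φ (τseq n x) * g x‖ ≤ L * δ * M := by
          filter_upwards [ae_mem_Icc] with x hx
          rw [Real.norm_eq_abs]
          calc |φ (τ x) * g x - φ (τseq n x) * g x|
              = |φ (τ x) - φ (τseq n x)| * |g x| := by rw [← abs_mul, sub_mul]
            _ ≤ (L * δ) * M := by
                apply mul_le_mul _ (hhbdd (σ j) x) (abs_nonneg _) (by positivity)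
                calc |φ (τ x) - φ (τseq n x)| ≤ L * |τ x - τseq n x| := hφLip _ _
                  _ ≤ L * δ := by
                      apply mul_le_mul_of_nonneg_left _ hL
                      rw [← Real.dist_eq]
                      exact (hj2 x hx).le
            _ = L * δ * M := by ring
        calc |∫ x, (φ (τ x) * g x - φ (τseq n x) * g x) ∂m|
            = ‖∫ x, (φ (τ x) * g x - φ (τseq n x) * g x) ∂m‖ := (Real.norm_eq_abs _).symm
          _ ≤ ∫ x, ‖φ (τ x) * g x - φ (τseq n x) * g x‖ ∂m := norm_integral_le_integral_norm _
          _ ≤ ∫ x, (L * δ * M) ∂m :=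
              integral_mono_of_nonneg (Eventually.of_forall fun x => norm_nonneg _)
                (integrable_const _) hptbound
          _ = L * δ * M := by simp
          _ ≤ ε / 4 := by
              rw [hδdef]
              have h4 : (0:ℝ) < 4 * (L * M + 1) := by positivity
              have heq : L * (ε / (4 * (L * M + 1))) * M = ((L * M) * ε) / (4 * (L * M + 1)) := by
                ring
              rw [heq, div_le_div_iff₀ h4 (by norm_num : (0:ℝ) < 4)]
              nlinarith [mul_nonneg (mul_nonneg hL hM0.le) hε.le]
      have ht3 : |(∫ x, φ (τseq n x) * g x ∂m) - ∫ x, φ x * g x ∂m| ≤ ε / 4 := by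
        have e1 : ∫ x, φ (τseq n x) * g x ∂m = ∫ x, φ (τseq n x) * sv (σ j) x ∂m := by
          apply integral_congr_ae
          filter_upwards [hhae (σ j)] with x hx
          rw [hg, hx]
        have e2 : ∫ x, φ x * g x ∂m = ∫ x, φ x * sv (σ j) x ∂m := by
          apply integral_congr_ae
          filter_upwards [hhae (σ j)] with x hx
          rw [hg, hx]
        rw [e1, e2]
        exact le_trans (hsvdef (σ j) φ hφm hφb) hj3
      have hsplit : D = ((∫ x, φ (τ x) * fstar x ∂m) - ∫ x, φ (τ x) * g x ∂m)
          + ((∫ x, φ (τ x) * g x ∂m) - ∫ x, φ (τseq n x) * g x ∂m)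
          + ((∫ x, φ (τseq n x) * g x ∂m) - ∫ x, φ x * g x ∂m)
          + ((∫ x, φ x * g x ∂m) - ∫ x, φ x * fstar x ∂m) := by
        rw [hD]; ring
      have habs4 : ∀ a b c d : ℝ, |a + b + c + d| ≤ |a| + |b| + |c| + |d| := by
        intro a b c d
        calc |a + b + c + d| ≤ |a + b + c| + |d| := abs_add_le _ _
          _ ≤ (|a + b| + |c|) + |d| := add_le_add (abs_add_le _ _) le_rfl
          _ ≤ ((|a| + |b|) + |c|) + |d| := add_le_add (add_le_add (abs_add_le _ _) le_rfl) le_rfl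
      rw [hsplit]
      calc |_ + _ + _ + _| ≤ _ := habs4 _ _ _ _
        _ ≤ ε/4 + ε/4 + ε/4 + ε/4 :=
            add_le_add (add_le_add (add_le_add ht1 ht2) ht3) ht4
        _ = ε := by ring
    have hD0 : D = 0 := by
      by_contra hc
      have h1 : 0 < |D| := abs_pos.mpr hc
      have h2 := hDbound (|D|/2) (by linarith)
      linarith
    linarith [hD0]
  -- pointwise approximation of indicators of Iic t
  have hmap : Measure.map T μ = μ := by
    haveI : IsProbabilityMeasure (Measure.map T μ) :=
      Measure.isProbabilityMeasure_map hTmeas.aemeasurable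
    apply Measure.ext_of_Iic
    intro t
    set φk : ℕ → ℝ → ℝ := fun k x => cl (1 - (k+1 : ℝ) * (x - t)) with hφk
    have hφkcont : ∀ k, Continuous (φk k) := by
      intro k
      exact cl_continuous.comp
        (continuous_const.sub (continuous_const.mul (continuous_id.sub continuous_const)))
    have hφkm : ∀ k, Measurable (φk k) := fun k => (hφkcont k).measurable
    have hφkb : ∀ k y, |φk k y| ≤ 1 := by
      intro k y
      have h1 := cl_mem (1 - (k+1:ℝ) * (y - t))
      rw [abs_le]
      exact ⟨by linarith [h1.1], h1.2⟩
    have hφkLip : ∀ k (u w : ℝ), |φk k u - φk k w| ≤ (k+1:ℝ) * |u - w| := by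
      intro k u w
      calc |φk k u - φk k w|
          ≤ |(1 - (k+1:ℝ)*(u-t)) - (1 - (k+1:ℝ)*(w-t))| := cl_lipschitz _ _
        _ = (k+1:ℝ) * |u - w| := by
            rw [show (1 - (k+1:ℝ)*(u-t)) - (1 - (k+1:ℝ)*(w-t)) = -((k+1:ℝ)*(u - w)) by ring,
              abs_neg, abs_mul, abs_of_nonneg (by positivity : (0:ℝ) ≤ (k:ℝ)+1)]
    have hIk : ∀ k, ∫ x, φk k (T x) * fstar x ∂m = ∫ x, φk k x * fstar x ∂m :=
      fun k => hINV (k+1:ℝ) (φk k) (by positivity) (hφkm k) (hφkb k) (hφkLip k)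
    have hmu1 : ∀ k, ∫ x, φk k (T x) ∂μ = ∫ x, φk k x ∂μ := by
      intro k
      rw [hμ, integral_nu hfmeas hfnn (fun x => φk k (T x)), integral_nu hfmeas hfnn (φk k)]
      have c1 : ∫ x, fstar x * φk k (T x) ∂m = ∫ x, φk k (T x) * fstar x ∂m :=
        integral_congr_ae (Eventually.of_forall fun x => mul_comm _ _)
      have c2 : ∫ x, fstar x * φk k x ∂m = ∫ x, φk k x * fstar x ∂m :=
        integral_congr_ae (Eventually.of_forall fun x => mul_comm _ _)
      rw [c1, c2]
      exact hIk k
    -- pointwise limit of φk at any point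
    have hptlim : ∀ y : ℝ, Tendsto (fun k => φk k y) atTop
        (𝓝 ((Iic t).indicator (fun _ => (1:ℝ)) y)) := by
      intro y
      by_cases hy : y ≤ t
      · have h1 : ∀ k : ℕ, φk k y = 1 := by
          intro k
          apply cl_eq_one
          nlinarith [sub_nonpos.mpr hy, (by positivity : (0:ℝ) < (k:ℝ)+1)]
        rw [indicator_of_mem (mem_Iic.mpr hy)]
        rw [funext h1]
        exact tendsto_const_nhds
      · push_neg at hy
        rw [indicator_of_notMem (by simpa using not_le.mpr hy)]
        have hyt : 0 < y - t := by linarith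
        apply tendsto_atTop_of_eventually_const (i₀ := Nat.ceil (1/(y - t)))
        intro k hk
        apply cl_eq_zero
        have h1 : 1/(y - t) ≤ (k:ℝ) := le_trans (Nat.le_ceil _) (by exact_mod_cast hk)
        have h2 : 1 ≤ (k:ℝ) * (y - t) := by
          rw [div_le_iff₀ hyt] at h1
          linarith
        nlinarith [hyt]
    have hlim1 : Tendsto (fun k => ∫ x, φk k x ∂μ) atTop (𝓝 ((μ (Iic t)).toReal)) := by
      have hind : ∫ x, (Iic t).indicator (fun _ => (1:ℝ)) x ∂μ = (μ (Iic t)).toReal := by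
        rw [integral_indicator_const _ measurableSet_Iic]
        simp [Measure.real]
      rw [← hind]
      apply tendsto_integral_of_dominated_convergence (bound := fun _ => 1)
      · exact fun k => (hφkm k).aestronglyMeasurable
      · exact integrable_const _
      · intro k
        exact Eventually.of_forall fun x => by rw [Real.norm_eq_abs]; exact hφkb k x
      · exact Eventually.of_forall fun x => hptlim x
    have hlim2 : Tendsto (fun k => ∫ x, φk k (T x) ∂μ) atTop
        (𝓝 ((μ (T ⁻¹' Iic t)).toReal)) := by
      have hindeq : ∀ x, (Iic t).indicator (fun _ => (1:ℝ)) (T x)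
          = (T ⁻¹' Iic t).indicator (fun _ => (1:ℝ)) x := by
        intro x
        by_cases h : T x ∈ Iic t
        · rw [indicator_of_mem h, indicator_of_mem (by exact h)]
        · rw [indicator_of_notMem h, indicator_of_notMem (by exact h)]
      have hind : ∫ x, (T ⁻¹' Iic t).indicator (fun _ => (1:ℝ)) x ∂μ
          = (μ (T ⁻¹' Iic t)).toReal := by
        rw [integral_indicator_const _ (hTmeas measurableSet_Iic)]
        simp [Measure.real]
      rw [← hind]
      apply tendsto_integral_of_dominated_convergence (bound := fun _ => 1)
      · exact fun k => ((hφkm k).comp hTmeas).aestronglyMeasurable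
      · exact integrable_const _
      · intro k
        exact Eventually.of_forall fun x => by rw [Real.norm_eq_abs]; exact hφkb k _
      · apply Eventually.of_forall
        intro x
        rw [← hindeq x]
        exact hptlim (T x)
    have heq : (μ (T ⁻¹' Iic t)).toReal = (μ (Iic t)).toReal :=
      tendsto_nhds_unique ((tendsto_congr hmu1).mp hlim2) hlim1
    rw [Measure.map_apply hTmeas measurableSet_Iic]
    exact (ENNReal.toReal_eq_toReal_iff' (measure_ne_top μ _) (measure_ne_top μ _)).mp heq
  -- conclusion
  refine ⟨μ, hprob, ?_, hμm, fstar, hμ, ne_top_of_le_ne_top hCne hfvarC, hfvarC⟩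
  intro E hE
  have h1 : μ (τ ⁻¹' E) = μ (T ⁻¹' E) := measure_congr (preimage_aeeq (hμm.ae_eq hTae) E)
  rw [h1, ← Measure.map_apply hTmeas hE, hmap]
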